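/- arXiv:2101.04871 — 4 statements merged into one kernel-verified Lean document; each statement's English description precedes it below -/
import Mathlib

section
/- Let G be a group and let j ≥ 1. Suppose φ = ⁅g₁,h₁⁆⁅g₂,h₂⁆⋯⁅g_m,h_m⁆ is a product of commutators such that for every 1 ≤ l ≤ m either g_l ∈ C^{(j-1)}(G) or h_l ∈ C^{(j-1)}(G). Then for every natural number k there exists α_k ∈ C^{(j+1)}(G) such that φ^{k²} = ⁅g₁^k,h₁^k⁆⁅g₂^k,h₂^k⁆⋯⁅g_m^k,h_m^k⁆ · α_k. -/
open scoped commutatorElement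

section Aux
variable {G : Type*} [Group G]

theorem stmt0_comm_mem (n : ℕ) {a : G} (b : G) (ha : a ∈ (⊤ : Subgroup G).lowerCentralSeries n) :
    ⁅a, b⁆ ∈ (⊤ : Subgroup G).lowerCentralSeries (n + 1) := by
  rw [Subgroup.lowerCentralSeries_succ]
  exact Subgroup.subset_closure ⟨a, ha, b, Subgroup.mem_top b, rfl⟩

end Aux

/-- Let `G` be a group and `j ≥ 1`. Suppose
`φ = ⁅g₁,h₁⁆⋯⁅g_m,h_m⁆` where for each `l` either `g l` or `h l` lies in
`C^{(j-1)}(G)` (the `(j-1)`-st term of the descending central series,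
`lowerCentralSeries G (j-1)`). Then for every `k` there is
`α_k ∈ C^{(j+1)}(G)` with `φ^(k²) = ⁅g₁^k,h₁^k⁆⋯⁅g_m^k,h_m^k⁆ * α_k`. -/
theorem stmt0 {G : Type*} [Group G] (j : ℕ) (hj : 1 ≤ j) (m : ℕ)
    (g h : Fin m → G)
    (hgh : ∀ l : Fin m, g l ∈ (⊤ : Subgroup G).lowerCentralSeries (j - 1) ∨
      h l ∈ (⊤ : Subgroup G).lowerCentralSeries (j - 1))
    (φ : G) (hφ : φ = (List.ofFn fun l : Fin m => ⁅g l, h l⁆).prod) :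
    ∀ k : ℕ, ∃ α ∈ (⊤ : Subgroup G).lowerCentralSeries (j + 1),
      φ ^ (k ^ 2) = (List.ofFn fun l : Fin m => ⁅(g l) ^ k, (h l) ^ k⁆).prod * α := by
  intro k
  set N := (⊤ : Subgroup G).lowerCentralSeries (j + 1) with hN
  let π : G →* G ⧸ N := QuotientGroup.mk' N
  have hjj : j - 1 + 1 = j := Nat.sub_add_cancel hj
  have hker : ∀ x : G, x ∈ N → π x = 1 := fun x hx => (QuotientGroup.eq_one_iff x).mpr hx
  -- elements of C^{(j)} become central in the quotient
  have hcent : ∀ x : G, x ∈ (⊤ : Subgroup G).lowerCentralSeries j → π x ∈ Subgroup.center (G ⧸ N) := by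
    intro x hx
    rw [Subgroup.mem_center_iff]
    intro q
    obtain ⟨b, rfl⟩ := QuotientGroup.mk'_surjective N q
    have h1 : ⁅π x, π b⁆ = 1 := by
      rw [← map_commutatorElement]
      exact hker _ (stmt0_comm_mem j b hx)
    exact (commutatorElement_eq_one_iff_mul_comm.mp h1).symm
  -- the commutator of something in C^{(j-1)} with anything is in C^{(j)}
  have hCj : ∀ a b : G, a ∈ (⊤ : Subgroup G).lowerCentralSeries (j - 1) → ⁅a, b⁆ ∈ (⊤ : Subgroup G).lowerCentralSeries j := by
    intro a b ha
    have := stmt0_comm_mem (j - 1) b ha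
    rwa [hjj] at this
  -- bilinearity in the quotient, right argument
  have hright : ∀ a : G, a ∈ (⊤ : Subgroup G).lowerCentralSeries (j - 1) → ∀ c d : G,
      π ⁅a, c * d⁆ = π ⁅a, c⁆ * π ⁅a, d⁆ := by
    intro a ha c d
    have hc : π (c * ⁅a, d⁆ * c⁻¹) = π ⁅a, d⁆ := by
      have := (Subgroup.mem_center_iff.mp (hcent _ (hCj a d ha)) (π c)).symm
      simp only [map_mul, map_inv]
      rw [← this]; group
    have hid : ⁅a, c * d⁆ = ⁅a, c⁆ * (c * ⁅a, d⁆ * c⁻¹) := by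
      simp only [commutatorElement_def]; group
    rw [hid, map_mul, hc]
  have hleft : ∀ a b : G, a ∈ (⊤ : Subgroup G).lowerCentralSeries (j - 1) →
      b ∈ (⊤ : Subgroup G).lowerCentralSeries (j - 1) → ∀ c : G,
      π ⁅a * b, c⁆ = π ⁅a, c⁆ * π ⁅b, c⁆ := by
    intro a b ha hb c
    have hc : π (a * ⁅b, c⁆ * a⁻¹) = π ⁅b, c⁆ := by
      have := (Subgroup.mem_center_iff.mp (hcent _ (hCj b c hb)) (π a)).symm
      simp only [map_mul, map_inv]
      rw [← this]; group
    have hid : ⁅a * b, c⁆ = (a * ⁅b, c⁆ * a⁻¹) * ⁅a, c⁆ := by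
      simp only [commutatorElement_def]; group
    rw [hid, map_mul, hc]
    exact (Subgroup.mem_center_iff.mp (hcent _ (hCj b c hb)) _).symm
  -- powers, right argument
  have hpowr : ∀ a : G, a ∈ (⊤ : Subgroup G).lowerCentralSeries (j - 1) → ∀ c : G, ∀ n : ℕ,
      π ⁅a, c ^ n⁆ = π ⁅a, c⁆ ^ n := by
    intro a ha c n
    induction n with
    | zero => simp
    | succ n ih => rw [pow_succ, hright a ha, ih, pow_succ]
  have hpow : ∀ a : G, a ∈ (⊤ : Subgroup G).lowerCentralSeries (j - 1) → ∀ c : G,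
      π ⁅a ^ k, c ^ k⁆ = π ⁅a, c⁆ ^ k ^ 2 := by
    intro a ha c
    have hmem : ∀ n : ℕ, a ^ n ∈ (⊤ : Subgroup G).lowerCentralSeries (j - 1) :=
      fun n => Subgroup.pow_mem _ ha n
    have : ∀ n : ℕ, π ⁅a ^ n, c ^ k⁆ = π ⁅a, c ^ k⁆ ^ n := by
      intro n
      induction n with
      | zero => simp
      | succ n ih => rw [pow_succ, hleft _ _ (hmem n) ha, ih, pow_succ]
    rw [this k, hpowr a ha c k, ← pow_mul, sq]
  -- key: for every l, π ⁅g l ^ k, h l ^ k⁆ = π ⁅g l, h l⁆ ^ k ^ 2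
  have hkey : ∀ l : Fin m, π ⁅(g l) ^ k, (h l) ^ k⁆ = π ⁅g l, h l⁆ ^ k ^ 2 := by
    intro l
    rcases hgh l with ha | hb
    · exact hpow _ ha _
    · have := hpow _ hb (g l)
      calc π ⁅(g l) ^ k, (h l) ^ k⁆ = (π ⁅(h l) ^ k, (g l) ^ k⁆)⁻¹ := by
            rw [← map_inv, commutatorElement_inv]
        _ = (π ⁅h l, g l⁆ ^ k ^ 2)⁻¹ := by rw [this]
        _ = ((π ⁅h l, g l⁆)⁻¹) ^ k ^ 2 := by rw [inv_pow]
        _ = π ⁅g l, h l⁆ ^ k ^ 2 := by rw [← map_inv, commutatorElement_inv]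
  -- each commutator image lies in the center
  have hcl : ∀ l : Fin m, π ⁅g l, h l⁆ ∈ Subgroup.center (G ⧸ N) := by
    intro l
    apply hcent
    rcases hgh l with ha | hb
    · exact hCj _ _ ha
    · rw [← commutatorElement_inv]
      exact ((⊤ : Subgroup G).lowerCentralSeries j).inv_mem (hCj _ _ hb)
  -- compute in the center (a commutative group)
  let c : Fin m → Subgroup.center (G ⧸ N) := fun l => ⟨π ⁅g l, h l⁆, hcl l⟩
  have hprod : π φ = ((List.ofFn c).prod : Subgroup.center (G ⧸ N)) := by
    rw [hφ, map_list_prod, SubmonoidClass.coe_list_prod, List.map_ofFn, List.map_ofFn]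
    rfl
  have hc2 : ((List.ofFn c).prod) ^ k ^ 2 = (List.ofFn fun l => (c l) ^ k ^ 2).prod := by
    open scoped IsMulCommutative in rw [List.prod_ofFn, List.prod_ofFn, ← Finset.prod_pow]
  have hlists : (List.ofFn (Subtype.val ∘ fun l : Fin m => (c l) ^ k ^ 2)) =
      List.ofFn (⇑π ∘ fun l : Fin m => ⁅(g l) ^ k, (h l) ^ k⁆) := by
    refine congrArg List.ofFn (funext fun l => ?_)
    show ((c l ^ k ^ 2 : Subgroup.center (G ⧸ N)) : G ⧸ N) = π ⁅(g l) ^ k, (h l) ^ k⁆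
    rw [SubmonoidClass.coe_pow, hkey l]
  have hmain : π (φ ^ k ^ 2) = π ((List.ofFn fun l : Fin m => ⁅(g l) ^ k, (h l) ^ k⁆).prod) := by
    rw [map_pow, hprod, ← SubmonoidClass.coe_pow, hc2, SubmonoidClass.coe_list_prod,
      List.map_ofFn, map_list_prod, List.map_ofFn, hlists]
  -- extract α
  set P := (List.ofFn fun l : Fin m => ⁅(g l) ^ k, (h l) ^ k⁆).prod with hP
  refine ⟨P⁻¹ * φ ^ k ^ 2, ?_, by group⟩
  have h1 : π (P⁻¹ * φ ^ k ^ 2) = 1 := by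
    rw [map_mul, map_inv, hmain, inv_mul_cancel]
  exact (QuotientGroup.eq_one_iff _).mp h1
end

section
/- Let G be a group and f ∈ G. Let H = ⟨G', f⟩ be the subgroup of G generated by the derived subgroup G' = C^{(1)}(G) together with f. Then for every j ≥ 1 the j-th term of the descending central series of H, viewed as a subgroup of G, is contained in C^{(j+1)}(G), i.e. C^{(j)}(H) ⊆ C^{(j+1)}(G). -/
open scoped Pointwise commutatorElement


/-- Let `G` be a group, `f ∈ G`, and let
`H = ⟨G', f⟩` be the subgroup generated by the derived subgroup
`G' = C^{(1)}(G) = (⊤ : Subgroup G).lowerCentralSeries 1` together with `f`. Then for every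
`j ≥ 1` the `j`-th term of the descending central series of `H`, viewed inside
`G`, is contained in `C^{(j+1)}(G)`. -/
theorem stmt2 {G : Type*} [Group G] (f : G) :
    ∀ j : ℕ, 1 ≤ j →
      ((⊤ : Subgroup (↥((⊤ : Subgroup G).lowerCentralSeries 1 ⊔ Subgroup.closure {f}))).lowerCentralSeries j).map
          ((⊤ : Subgroup G).lowerCentralSeries 1 ⊔ Subgroup.closure {f}).subtype
        ≤ (⊤ : Subgroup G).lowerCentralSeries (j + 1) := by
  set H : Subgroup G := (⊤ : Subgroup G).lowerCentralSeries 1 ⊔ Subgroup.closure {f} with hHdef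
  intro j hj
  induction j, hj using Nat.le_induction with
  | base =>
    -- C^(1)(H) = ⁅⊤,⊤⁆, its image is ⁅H,H⁆
    have h1 : (⊤ : Subgroup ↥H).lowerCentralSeries 1 = ⁅(⊤ : Subgroup ↥H), (⊤ : Subgroup ↥H)⁆ := rfl
    rw [h1, Subgroup.map_commutator]
    have hmap : (⊤ : Subgroup ↥H).map H.subtype = H := by
      rw [← MonoidHom.range_eq_map, Subgroup.range_subtype]
    rw [hmap, Subgroup.commutator_le]
    intro a ha b hb
    -- work in the quotient Q = G / C²(G)
    set N : Subgroup G := (⊤ : Subgroup G).lowerCentralSeries 2 with hN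
    have hNnormal : N.Normal := inferInstance
    let π : G →* G ⧸ N := QuotientGroup.mk' N
    -- images of elements of G' are central in Q
    have hcen : ∀ g ∈ (⊤ : Subgroup G).lowerCentralSeries 1, ∀ x : G, Commute (π g) (π x) := by
      intro g hg x
      have : ⁅g, x⁆ ∈ N := by
        have : ⁅g, x⁆ ∈ ⁅(⊤ : Subgroup G).lowerCentralSeries 1, (⊤ : Subgroup G)⁆ :=
          Subgroup.commutator_mem_commutator hg (Subgroup.mem_top x)
        exact this
      have h1 : π ⁅g, x⁆ = 1 := (QuotientGroup.eq_one_iff _).mpr this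
      rw [map_commutatorElement] at h1
      exact commutatorElement_eq_one_iff_commute.mp h1
    -- decompose elements of H = G' ⊔ ⟨f⟩
    have hdecomp : ∀ c ∈ H, ∃ n ∈ (⊤ : Subgroup G).lowerCentralSeries 1, ∃ s : ℤ, c = n * f ^ s := by
      intro c hc
      have : c ∈ (((⊤ : Subgroup G).lowerCentralSeries 1 : Set G) * (Subgroup.closure {f} : Set G)) := by
        rw [← Subgroup.normal_mul]; exact hc
      obtain ⟨n, hn, k, hk, rfl⟩ := this
      obtain ⟨s, rfl⟩ := Subgroup.mem_closure_singleton.mp hk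
      exact ⟨n, hn, s, rfl⟩
    obtain ⟨n, hn, s, rfl⟩ := hdecomp a ha
    obtain ⟨m, hm, t, rfl⟩ := hdecomp b hb
    have hcomm : Commute (π (n * f ^ s)) (π (m * f ^ t)) := by
      rw [map_mul, map_mul, map_zpow, map_zpow]
      have h1 : Commute (π n) (π m * π f ^ t) := hcen n hn _
      have h2 : Commute (π f ^ s) (π m) := (hcen m hm f).symm.zpow_left s
      have h3 : Commute (π f ^ s) (π f ^ t) := (Commute.refl (π f)).zpow_zpow s t
      exact h1.mul_left (h2.mul_right h3)
    have : π ⁅n * f ^ s, m * f ^ t⁆ = 1 := by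
      rw [map_commutatorElement]
      exact commutatorElement_eq_one_iff_commute.mpr hcomm
    exact (QuotientGroup.eq_one_iff _).mp this
  | succ j hj ih =>
    have h1 : (⊤ : Subgroup ↥H).lowerCentralSeries (j + 1) =
        ⁅(⊤ : Subgroup ↥H).lowerCentralSeries j, (⊤ : Subgroup ↥H)⁆ := rfl
    have h2 : (⊤ : Subgroup G).lowerCentralSeries (j + 2) =
        ⁅(⊤ : Subgroup G).lowerCentralSeries (j + 1), (⊤ : Subgroup G)⁆ := rfl
    rw [h1, Subgroup.map_commutator, h2]
    exact Subgroup.commutator_mono ih le_top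
end

section
/- Let S be a nonempty compact Hausdorff topological space and let G be a group of homeomorphisms of S (a subgroup of the homeomorphism group of S). Suppose there exists a natural number m ≥ 1 such that every finitely generated subgroup H of G has a finite orbit with at most m elements, i.e. there is a point z ∈ S whose H-orbit {h(z) : h ∈ H} is finite with at most m elements. Then G itself has a finite orbit with at most m elements: there exists z ∈ S whose G-orbit {g(z) : g ∈ G} has at most m elements. -/
/-- Let `S` be a nonempty compact Hausdorff space and `G` a
group of homeomorphisms of `S` (a subgroup of the group of bijections of `S`,
each of whose elements is a homeomorphism). If there is `m ≥ 1` such that every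
finitely generated subgroup `H ≤ G` has a finite orbit with at most `m`
elements, then `G` itself has a finite orbit with at most `m` elements. -/
theorem stmt3 {S : Type*} [TopologicalSpace S] [CompactSpace S] [T2Space S]
    [Nonempty S] (G : Subgroup (Equiv.Perm S))
    (hhom : ∀ g ∈ G, IsHomeomorph (⇑g : S → S)) (m : ℕ) (hm : 1 ≤ m)
    (h : ∀ H : Subgroup (Equiv.Perm S), H ≤ G → H.FG →
      ∃ z : S, {x : S | ∃ g ∈ H, g z = x}.Finite ∧
        {x : S | ∃ g ∈ H, g z = x}.ncard ≤ m) :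
    ∃ z : S, {x : S | ∃ g ∈ G, g z = x}.Finite ∧
      {x : S | ∃ g ∈ G, g z = x}.ncard ≤ m := by
  classical
  -- the finitely generated subgroup associated to a finite set of elements of G
  set Hof : Finset ↥G → Subgroup (Equiv.Perm S) :=
    fun F => Subgroup.closure ((↑) '' (↑F : Set ↥G)) with hHof
  have hHofG : ∀ F, Hof F ≤ G := by
    intro F
    apply (Subgroup.closure_le _).2
    rintro g ⟨⟨g, hg⟩, -, rfl⟩
    exact hg
  -- key closed sets
  set K : Finset ↥G → Set S := fun F =>
    ⋂ (f : Fin (m + 1) → Equiv.Perm S) (_ : ∀ i, f i ∈ Hof F),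
      ⋃ (i : Fin (m + 1)) (j : Fin (m + 1)) (_ : i ≠ j), {z : S | f i z = f j z}
    with hK
  have hKclosed : ∀ F, IsClosed (K F) := by
    intro F
    apply isClosed_iInter; intro f
    apply isClosed_iInter; intro hf
    apply isClosed_iUnion_of_finite; intro i
    apply isClosed_iUnion_of_finite; intro j
    apply isClosed_iUnion_of_finite; intro _
    exact isClosed_eq (hhom _ (hHofG F (hf i))).continuous
      (hhom _ (hHofG F (hf j))).continuous
  have hKmem : ∀ (F : Finset ↥G) (z : S),
      {x : S | ∃ g ∈ Hof F, g z = x}.Finite →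
      {x : S | ∃ g ∈ Hof F, g z = x}.ncard ≤ m → z ∈ K F := by
    intro F z hfin hcard
    simp only [hK, Set.mem_iInter]
    intro f hf
    set O := {x : S | ∃ g ∈ Hof F, g z = x}
    haveI : Fintype O := hfin.fintype
    have hlt : Fintype.card O < Fintype.card (Fin (m + 1)) := by
      rw [Fintype.card_fin, ← Nat.card_eq_fintype_card, Nat.card_coe_set_eq]
      omega
    obtain ⟨i, j, hij, hfe⟩ := Fintype.exists_ne_map_eq_of_card_lt
      (fun i : Fin (m + 1) => (⟨f i z, f i, hf i, rfl⟩ : O)) hlt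
    refine Set.mem_iUnion.2 ⟨i, Set.mem_iUnion.2 ⟨j, Set.mem_iUnion.2 ⟨hij, ?_⟩⟩⟩
    exact Subtype.ext_iff.1 hfe
  have hKne : ∀ F, (K F).Nonempty := by
    intro F
    obtain ⟨z, hfin, hcard⟩ := h (Hof F) (hHofG F)
      ((Subgroup.fg_iff _).2 ⟨Subtype.val '' (↑F : Set ↥G), rfl, F.finite_toSet.image _⟩)
    exact ⟨z, hKmem F z hfin hcard⟩
  have hKanti : ∀ F F' : Finset ↥G, F ⊆ F' → K F' ⊆ K F := by
    intro F F' hFF' z hz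
    simp only [hK, Set.mem_iInter] at hz ⊢
    intro f hf
    exact hz f fun i => Subgroup.closure_mono
      (Set.image_mono (Finset.coe_subset.2 hFF')) (hf i)
  have hdir : Directed (· ⊇ ·) K := fun F F' =>
    ⟨F ∪ F', hKanti _ _ Finset.subset_union_left, hKanti _ _ Finset.subset_union_right⟩
  obtain ⟨z, hz⟩ := IsCompact.nonempty_iInter_of_directed_nonempty_isCompact_isClosed
    K hdir hKne (fun F => (hKclosed F).isCompact) hKclosed
  refine ⟨z, ?_⟩
  set O := {x : S | ∃ g ∈ G, g z = x} with hO
  -- main claim : every finset inside O has at most m elements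
  have claim : ∀ t : Finset S, ↑t ⊆ O → t.card ≤ m := by
    intro t ht
    by_contra hc
    push_neg at hc
    obtain ⟨t', ht't, ht'card⟩ := Finset.exists_subset_card_eq (Nat.succ_le_of_lt hc)
    have e : Fin (m + 1) ≃ ↥t' := (t'.equivFin.trans (finCongr ht'card)).symm
    have hmem : ∀ i : Fin (m + 1), (e i : S) ∈ O := fun i => ht (ht't (e i).2)
    choose g hg hgz using hmem
    set F : Finset ↥G := Finset.image (fun i => (⟨g i, hg i⟩ : ↥G)) Finset.univ with hF
    have hzF := Set.mem_iInter.1 hz F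
    simp only [hK, Set.mem_iInter] at hzF
    have hgi : ∀ i, g i ∈ Hof F := by
      intro i
      apply Subgroup.subset_closure
      exact ⟨⟨g i, hg i⟩, by simp [hF], rfl⟩
    obtain ⟨i, hrest⟩ := Set.mem_iUnion.1 (hzF g hgi)
    obtain ⟨j, hrest⟩ := Set.mem_iUnion.1 hrest
    obtain ⟨hij, heq⟩ := Set.mem_iUnion.1 hrest
    have : (e i : S) = (e j : S) := by rw [← hgz i, ← hgz j]; exact heq
    exact hij (e.injective (Subtype.ext this))
  have hfin : O.Finite := by
    by_contra hinf
    obtain ⟨t, hts, htcard⟩ := Set.Infinite.exists_subset_card_eq hinf (m + 1)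
    have := claim t hts
    omega
  refine ⟨hfin, ?_⟩
  have := claim hfin.toFinset (by simp)
  rwa [Set.ncard_eq_toFinset_card O hfin]
end

section
/- Let a ≥ 1 be an integer and let A be an invertible a × a matrix with rational entries. Suppose there exists c ∈ ℚ such that the trace of A^m equals c for every integer m with 1 ≤ m ≤ a + 1. Then the trace of A^m equals c for every integer m ≥ 1, and moreover c = a. -/
/-- Let `a ≥ 1` and let `A` be an invertible `a × a` matrix
over `ℚ`. If there is `c ∈ ℚ` with `tr(A^m) = c` for all `1 ≤ m ≤ a + 1`, then
`tr(A^m) = c` for every `m ≥ 1` and moreover `c = a`. -/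
theorem stmt7 (a : ℕ) (ha : 1 ≤ a) (A : Matrix (Fin a) (Fin a) ℚ)
    (hA : IsUnit A) (c : ℚ)
    (hc : ∀ m : ℕ, 1 ≤ m → m ≤ a + 1 → (A ^ m).trace = c) :
    (∀ m : ℕ, 1 ≤ m → (A ^ m).trace = c) ∧ c = a := by
  set p := A.charpoly with hp
  have hdeg : p.natDegree = a := by rw [hp, A.charpoly_natDegree_eq_dim]; exact Fintype.card_fin a
  have h0 : (Polynomial.aeval A) p = 0 := A.aeval_self_charpoly
  rw [Polynomial.aeval_eq_sum_range, hdeg] at h0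
  have hmonic : p.coeff a = 1 := by
    have := A.charpoly_monic
    rw [← hdeg]; exact this.coeff_natDegree
  -- key recurrence on traces
  have key : ∀ m : ℕ, (A ^ (m + a)).trace
      = -∑ i ∈ Finset.range a, p.coeff i * (A ^ (m + i)).trace := by
    intro m
    have h1 : ∑ i ∈ Finset.range (a + 1), p.coeff i • (A ^ (m + i)) = 0 := by
      have := congrArg (fun B => A ^ m * B) h0
      simpa [Finset.mul_sum, Matrix.mul_smul, pow_add, mul_zero] using this
    have h2 : ∑ i ∈ Finset.range (a + 1), p.coeff i * (A ^ (m + i)).trace = 0 := by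
      have := congrArg Matrix.trace h1
      simpa [Matrix.trace_sum, Matrix.trace_smul, smul_eq_mul] using this
    rw [Finset.sum_range_succ, hmonic, one_mul] at h2
    linarith
  have t1 : ∀ m, 1 ≤ m → m ≤ a + 1 → (A ^ m).trace = c := hc
  -- value of the recurrence with all inputs c
  have hcval : c = -∑ i ∈ Finset.range a, p.coeff i * c := by
    have h := key 1
    have hs : ∑ i ∈ Finset.range a, p.coeff i * (A ^ (1 + i)).trace
        = ∑ i ∈ Finset.range a, p.coeff i * c :=
      Finset.sum_congr rfl fun i hi => by
        rw [t1 (1 + i) (by omega) (by simp at hi; omega)]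
    rw [hs] at h
    rw [← h]
    exact (t1 (1 + a) (by omega) (by omega)).symm
  have main : ∀ m : ℕ, 1 ≤ m → (A ^ m).trace = c := by
    intro m
    induction m using Nat.strong_induction_on with
    | _ m ih =>
      intro hm
      by_cases h : m ≤ a + 1
      · exact hc m hm h
      · have hma : m = (m - a) + a := by omega
        rw [hma, key (m - a), hcval]
        congr 1
        apply Finset.sum_congr rfl
        intro i hi
        simp only [Finset.mem_range] at hi
        rw [ih (m - a + i) (by omega) (by omega)]
  refine ⟨main, ?_⟩
  -- now show c = a using m = 0 and invertibility
  have h0c : p.coeff 0 ≠ 0 := by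
    have hdet : IsUnit A.det := (Matrix.isUnit_iff_isUnit_det A).mp hA
    have hdne : A.det ≠ 0 := hdet.ne_zero
    have := A.det_eq_sign_charpoly_coeff
    intro h
    rw [h, mul_zero] at this
    exact hdne this
  have hsub : ∑ i ∈ Finset.range a, p.coeff i * ((A ^ (0 + i)).trace - c) = 0 := by
    have hkey0 := key 0
    rw [zero_add, main a ha] at hkey0
    have hexp : ∑ i ∈ Finset.range a, p.coeff i * ((A ^ (0 + i)).trace - c)
        = (∑ i ∈ Finset.range a, p.coeff i * (A ^ (0 + i)).trace)
          - ∑ i ∈ Finset.range a, p.coeff i * c := by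
      rw [← Finset.sum_sub_distrib]
      exact Finset.sum_congr rfl fun i _ => by ring
    rw [hexp]
    linarith [hkey0, hcval]
  have hz : ∑ i ∈ Finset.range a, p.coeff i * ((A ^ (0 + i)).trace - c)
      = p.coeff 0 * ((A ^ 0).trace - c) := by
    apply Finset.sum_eq_single_of_mem 0 (Finset.mem_range.mpr ha)
    intro i _ hi
    rw [main (0 + i) (by omega), sub_self, mul_zero]
  rw [hz] at hsub
  have htr0 : (A ^ 0 : Matrix (Fin a) (Fin a) ℚ).trace = a := by
    simp [Matrix.trace_one]
  rw [htr0] at hsub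
  rcases mul_eq_zero.mp hsub with h | h
  · exact absurd h h0c
  · linarith [sub_eq_zero.mp h]
end
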